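/- Feldman–Moore theorem: let X be a Polish space and E ⊆ X × X an equivalence relation that is a Borel subset of X × X and all of whose equivalence classes are countable. Then there exist a countable group Γ and an action of Γ on X (maps γ • · : X → X satisfying 1 • x = x and γ • (δ • x) = (γ * δ) • x) such that each map x ↦ γ • x is Borel measurable, and for all x, y ∈ X: x E y if and only if there exists γ ∈ Γ with γ • x = y. -/

import Mathlib

open Set MeasureTheory

namespace FMproof

abbrev Nsp := ℕ → ℕ


/-- cylinder determined by a finite list -/
def cyl (L : List ℕ) : Set Nsp := {z | ∀ i, (h : i < L.length) → z i = L[i]}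

lemma isClosed_cyl (L : List ℕ) : IsClosed (cyl L) := by
  have : cyl L = ⋂ (i : Fin L.length), {z : Nsp | z i = L[(i:ℕ)]} := by
    ext z; simp [cyl, Fin.forall_iff]
  rw [this]
  exact isClosed_iInter fun i => isClosed_eq (continuous_apply _) continuous_const

lemma measurableSet_cyl (L : List ℕ) : MeasurableSet (cyl L) :=
  (isClosed_cyl L).measurableSet

def prefixList (z : Nsp) (n : ℕ) : List ℕ := List.ofFn (fun i : Fin n => z i)

@[simp] lemma length_prefixList (z : Nsp) (n : ℕ) : (prefixList z n).length = n := by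
  simp [prefixList]

lemma getElem_prefixList (z : Nsp) (n i : ℕ) (h : i < (prefixList z n).length) :
    (prefixList z n)[i] = z i := by
  simp [prefixList]

lemma mem_cyl_prefixList (z : Nsp) (n : ℕ) : z ∈ cyl (prefixList z n) := by
  intro i h
  rw [getElem_prefixList]

lemma cyl_prefixList_mono (z : Nsp) {m n : ℕ} (h : m ≤ n) :
    cyl (prefixList z n) ⊆ cyl (prefixList z m) := by
  intro w hw i hi
  have hi' : i < (prefixList z n).length := by simpa using lt_of_lt_of_le (by simpa using hi) h
  have := hw i hi'
  rw [getElem_prefixList] at this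
  rw [getElem_prefixList]
  exact this

lemma prefix_prefixList {L : List ℕ} {z : Nsp} (hz : z ∈ cyl L) {n : ℕ} (hn : L.length ≤ n) :
    L <+: prefixList z n := by
  refine List.prefix_iff_eq_take.2 ?_
  apply List.ext_getElem
  · simp [List.length_take]; omega
  · intro i h1 h2
    rw [List.getElem_take]
    rw [getElem_prefixList]
    exact (hz i h1).symm

lemma cyl_subset_of_prefix {L M : List ℕ} (h : L <+: M) : cyl M ⊆ cyl L := by
  intro z hz i hi
  have hi' : i < M.length := lt_of_lt_of_le hi h.length_le
  have := hz i hi'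
  rw [h.getElem hi]
  exact this

/-- neighborhoods in countable products of discrete spaces contain "cylinders" -/
lemma pi_nbhd {D : Type} [TopologicalSpace D] [DiscreteTopology D]
    (z : ℕ → D) {V : Set (ℕ → D)} (hV : IsOpen V) (hz : z ∈ V) :
    ∃ N, ∀ w : ℕ → D, (∀ i < N, w i = z i) → w ∈ V := by
  obtain ⟨I, u, hu, hsub⟩ := isOpen_pi_iff.1 hV z hz
  refine ⟨(I.sup id) + 1, fun w hw => hsub ?_⟩
  intro a ha
  have : a < I.sup id + 1 := Nat.lt_succ_of_le (Finset.le_sup (f := id) ha)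
  rw [hw a this]
  exact (hu a ha).2

lemma cyl_nbhd (z : Nsp) {V : Set Nsp} (hV : IsOpen V) (hz : z ∈ V) :
    ∃ N, cyl (prefixList z N) ⊆ V := by
  obtain ⟨N, hN⟩ := pi_nbhd z hV hz
  refine ⟨N, fun w hw => hN w fun i hi => ?_⟩
  have := hw i (by simpa using hi)
  rwa [getElem_prefixList] at this

/-- enumeration of `List Bool` hitting every list at arbitrarily late stages with length bound -/
noncomputable def enumL (k : ℕ) : List Bool :=
  let L := ((Encodable.decode (α := List Bool) k.unpair.2).getD [])
  if L.length ≤ k then L else []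

lemma enumL_length (k : ℕ) : (enumL k).length ≤ k := by
  unfold enumL
  simp only []
  split
  · assumption
  · simp

lemma enumL_surj (L : List Bool) (N : ℕ) : ∃ k, N ≤ k ∧ enumL k = L := by
  refine ⟨Nat.pair (max N L.length) (Encodable.encode L), le_trans (le_max_left _ _) (Nat.left_le_pair _ _), ?_⟩
  unfold enumL
  have h1 : (Nat.pair (max N L.length) (Encodable.encode L)).unpair.2 = Encodable.encode L := by
    simp [Nat.unpair_pair]
  rw [h1]
  simp only [Encodable.encodek, Option.getD_some]
  have : L.length ≤ Nat.pair (max N L.length) (Encodable.encode L) :=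
    le_trans (le_max_right _ _) (Nat.left_le_pair _ _)
  simp [this]

/-- partial graph property -/
def Gr {X : Type} (G : Set (X × X)) : Prop :=
  ∀ p ∈ G, ∀ q ∈ G, p.1 = q.1 → p.2 = q.2

section ExtLemma

variable {X : Type} [TopologicalSpace X] [PolishSpace X] [MeasurableSpace X] [BorelSpace X]

lemma analytic_second_witness {P : Set (X × X)} (hP : AnalyticSet P) :
    AnalyticSet {q : X × X | ∃ y', (q.1, y') ∈ P ∧ y' ≠ q.2} := by
  rw [AnalyticSet] at hP
  rcases hP with h | ⟨g, hg, hgr⟩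
  · convert analyticSet_empty (α := X × X)
    ext q; simp [h]
  · have hW : IsOpen {zy : (ℕ → ℕ) × X | (g zy.1).2 ≠ zy.2} := by
      have hcl : IsClosed {zy : (ℕ → ℕ) × X | (g zy.1).2 = zy.2} :=
        isClosed_eq ((continuous_snd.comp hg).comp continuous_fst) continuous_snd
      have : {zy : (ℕ → ℕ) × X | (g zy.1).2 ≠ zy.2} = {zy : (ℕ → ℕ) × X | (g zy.1).2 = zy.2}ᶜ := by
        ext zy; simp
      rw [this]
      exact hcl.isOpen_compl
    have h1 : AnalyticSet ((fun zy : (ℕ → ℕ) × X => ((g zy.1).1, zy.2)) '' {zy | (g zy.1).2 ≠ zy.2}) :=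
      hW.analyticSet_image (by fun_prop)
    convert h1 using 1
    ext q
    constructor
    · rintro ⟨y', hy'P, hy'⟩
      rw [← hgr] at hy'P
      obtain ⟨z, hz⟩ := hy'P
      refine ⟨(z, q.2), ?_, ?_⟩
      · simp only [mem_setOf_eq, hz]
        exact hy'
      · simp [hz]
    · rintro ⟨⟨z, y⟩, hzy, hq⟩
      refine ⟨(g z).2, ?_, ?_⟩
      · have : (g z).1 = q.1 := by
          have := congrArg Prod.fst hq; simpa using this
        rw [← this]
        have : (g z).2 = (g z).2 := rfl
        have hmem : g z ∈ range g := mem_range_self z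
        rw [hgr] at hmem
        simpa using hmem
      · have hy : y = q.2 := by have := congrArg Prod.snd hq; simpa using this
        rw [← hy]
        exact hzy

/-- every analytic partial graph is contained in a Borel partial graph -/
lemma graph_ext {P : Set (X × X)} (hP : AnalyticSet P) (hgr : Gr P) :
    ∃ G : Set (X × X), MeasurableSet G ∧ P ⊆ G ∧ Gr G := by
  classical
  set Q : Set (X × X) := {q | ∃ y', (q.1, y') ∈ P ∧ y' ≠ q.2} with hQdef
  have hQ : AnalyticSet Q := analytic_second_witness hP
  have hdisj : Disjoint P Q := by
    rw [Set.disjoint_left]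
    rintro p hp ⟨y', hy'P, hy'⟩
    exact hy' (hgr _ hy'P _ hp rfl)
  obtain ⟨B₁, hPB₁, hQB₁, hB₁⟩ := hP.measurablySeparable hQ hdisj
  -- bad set of first coordinates
  set M : Set (X × X × X) := {t | (t.1, t.2.1) ∈ B₁ ∧ (t.1, t.2.2) ∈ B₁ ∧ t.2.1 ≠ t.2.2} with hMdef
  have hM : MeasurableSet M := by
    apply MeasurableSet.inter
    · exact hB₁.preimage (by fun_prop)
    apply MeasurableSet.inter
    · exact hB₁.preimage (by fun_prop)
    · have : IsClosed {t : X × X × X | t.2.1 = t.2.2} :=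
        isClosed_eq (by fun_prop) (by fun_prop)
      exact (this.measurableSet).compl
  have hBAD : AnalyticSet (Prod.fst '' M) := (hM.analyticSet).image_of_continuous continuous_fst
  have hprojP : AnalyticSet (Prod.fst '' P) := hP.image_of_continuous continuous_fst
  have hdisj2 : Disjoint (Prod.fst '' P) (Prod.fst '' M) := by
    rw [Set.disjoint_left]
    rintro x ⟨p, hp, hp1⟩ ⟨t, ⟨ht1, ht2, hne⟩, ht0⟩
    have hx : t.1 = p.1 := ht0.trans hp1.symm
    have hkey : ∀ y, (t.1, y) ∈ B₁ → y = p.2 := by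
      intro y hy
      by_contra hne'
      have hmem : (t.1, y) ∈ Q := by
        refine ⟨p.2, ?_, fun h => hne' h.symm⟩
        simp only [hx]
        simpa using hp
      exact (Set.disjoint_left.1 hQB₁) hmem hy
    exact hne ((hkey _ ht1).trans (hkey _ ht2).symm)
  obtain ⟨D, hPD, hBADD, hD⟩ := hprojP.measurablySeparable hBAD hdisj2
  refine ⟨B₁ ∩ {p | p.1 ∈ D}, hB₁.inter (hD.preimage measurable_fst), ?_, ?_⟩
  · intro p hp
    exact ⟨hPB₁ hp, hPD ⟨p, hp, rfl⟩⟩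
  · rintro p ⟨hpB, hpD⟩ q ⟨hqB, hqD⟩ h1
    by_contra hne
    have hq2 : (p.1, q.2) ∈ B₁ := by
      have : (q.1, q.2) ∈ B₁ := by simpa using hqB
      rwa [← h1] at this
    have : p.1 ∈ Prod.fst '' M := ⟨(p.1, p.2, q.2), ⟨by simpa using hpB, hq2, hne⟩, rfl⟩
    exact (Set.disjoint_left.1 hBADD) this hpD

end ExtLemma


section Core

variable {X : Type} [TopologicalSpace X] [PolishSpace X] [MeasurableSpace X] [BorelSpace X]
variable (f : Nsp → X × X)

/-- independence: image is a partial graph -/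
def Indep (S : Set Nsp) : Prop :=
  ∀ z ∈ S, ∀ z' ∈ S, (f z).1 = (f z').1 → (f z).2 = (f z').2

/-- coverable by countably many Borel independent sets -/
def Small (S : Set Nsp) : Prop :=
  ∃ C : Set (Set Nsp), C.Countable ∧ (∀ B ∈ C, MeasurableSet B ∧ Indep f B) ∧ S ⊆ ⋃₀ C

variable {f}

lemma Small.mono {S T : Set Nsp} (h : Small f T) (hST : S ⊆ T) : Small f S := by
  obtain ⟨C, h1, h2, h3⟩ := h
  exact ⟨C, h1, h2, hST.trans h3⟩

lemma small_empty : Small f (∅ : Set Nsp) := ⟨∅, countable_empty, by simp, by simp⟩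

lemma small_iUnion {ι : Type} [Countable ι] {s : ι → Set Nsp} (h : ∀ i, Small f (s i)) :
    Small f (⋃ i, s i) := by
  choose C h1 h2 h3 using h
  refine ⟨⋃ i, C i, countable_iUnion h1, ?_, ?_⟩
  · intro B hB
    simp only [mem_iUnion] at hB
    obtain ⟨i, hi⟩ := hB
    exact h2 i B hi
  · refine iUnion_subset fun i => (h3 i).trans ?_
    intro z hz
    obtain ⟨B, hB, hzB⟩ := hz
    exact ⟨B, mem_iUnion.2 ⟨i, hB⟩, hzB⟩

lemma small_union {S T : Set Nsp} (hS : Small f S) (hT : Small f T) : Small f (S ∪ T) := by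
  have := small_iUnion (s := fun b : Bool => if b then S else T) (by rintro (_|_) <;> simpa)
  refine this.mono ?_
  intro z hz
  rcases hz with h | h
  · exact mem_iUnion.2 ⟨true, by simpa⟩
  · exact mem_iUnion.2 ⟨false, by simpa⟩

lemma small_of_indep {B : Set Nsp} (hB : MeasurableSet B) (hI : Indep f B) : Small f B :=
  ⟨{B}, countable_singleton _, by simpa using ⟨hB, hI⟩, by simp⟩

lemma Small.exists_borel_cover {S : Set Nsp} (h : Small f S) :
    ∃ U : Set Nsp, MeasurableSet U ∧ Small f U ∧ S ⊆ U := by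
  obtain ⟨C, h1, h2, h3⟩ := h
  exact ⟨⋃₀ C, MeasurableSet.sUnion h1 (fun B hB => (h2 B hB).1), ⟨C, h1, h2, subset_rfl⟩, h3⟩

lemma nonempty_of_not_small {S : Set Nsp} (h : ¬ Small f S) : S.Nonempty := by
  rcases S.eq_empty_or_nonempty with h' | h'
  · exact absurd (h' ▸ small_empty) h
  · exact h'

/-- Fact A: a non-small analytic set contains an "edge" -/
lemma exists_edge_of_not_small (hf : Continuous f) {P : Set Nsp} (hP : AnalyticSet P)
    (h : ¬ Small f P) :
    ∃ z ∈ P, ∃ z' ∈ P, (f z).1 = (f z').1 ∧ (f z).2 ≠ (f z').2 := by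
  by_contra hcon
  push_neg at hcon
  have hind : Gr (f '' P) := by
    rintro p ⟨z, hz, rfl⟩ q ⟨z', hz', rfl⟩ h1
    exact hcon z hz z' hz' h1
  obtain ⟨G, hG, hPG, hGgr⟩ := graph_ext (hP.image_of_continuous hf) hind
  apply h
  refine (small_of_indep (hG.preimage hf.measurable) ?_).mono ?_
  · intro z hz z' hz' h1
    exact hGgr _ hz _ hz' h1
  · intro z hz
    exact hPG ⟨z, hz, rfl⟩

end Core

section Scheme

variable {X : Type} [MetricSpace X] [CompleteSpace X] [SecondCountableTopology X]
  [MeasurableSpace X] [BorelSpace X] [Nonempty X]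
variable (f : Nsp → X × X)

/-- configurations at stage `k` -/
abbrev Cfg (k : ℕ) : Type := ((Fin k → Bool) → List ℕ) × (Fin k → Bool → ℕ × ℚ)

/-- designated vertex at stage `k` -/
noncomputable def uuF (k : ℕ) : Fin k → Bool := fun i => (enumL k).getD i false

/-- vertex on the `j`-chain of the stage-`m` split -/
noncomputable def chainV (m : ℕ) (j : Bool) (k : ℕ) : Fin k → Bool := fun i =>
  if (i : ℕ) < m then (enumL m).getD i false else if (i : ℕ) = m then j else false

def initF {k : ℕ} (w : Fin (k+1) → Bool) : Fin k → Bool := fun i => w i.castSucc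

lemma initF_chainV (m : ℕ) (j : Bool) (k : ℕ) (hmk : m < k) :
    initF (chainV m j (k+1)) = chainV m j k := by
  funext i
  simp [initF, chainV]

lemma initF_chainV_self (j : Bool) (k : ℕ) :
    initF (chainV k j (k+1)) = uuF k := by
  funext i
  have hik : (i : ℕ) < k := i.isLt
  simp [initF, chainV, uuF, hik]

lemma chainV_last (m : ℕ) (j : Bool) : chainV m j (m+1) (Fin.last m) = j := by
  simp [chainV]

def Yball (p : ℕ × ℚ) : Set X := Metric.closedBall (TopologicalSpace.denseSeq X p.1) (p.2 : ℝ)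

/-- validity of a configuration -/
def Valid (k : ℕ) (c : Cfg k) : Prop :=
  (∀ u : Fin k → Bool, k ≤ (c.1 u).length) ∧
  (∀ m : ℕ, ∀ hm : m < k, ∀ j : Bool,
    (fun z => (f z).2) '' cyl (c.1 (chainV m j k)) ⊆ Yball (X := X) (c.2 ⟨m, hm⟩ j)) ∧
  (∀ m : Fin k, Disjoint (Yball (X := X) (c.2 m false)) (Yball (X := X) (c.2 m true)))

/-- extension relation between consecutive configurations -/
def Ext (k : ℕ) (c : Cfg k) (c' : Cfg (k+1)) : Prop :=
  (∀ w : Fin (k+1) → Bool, c.1 (initF w) <+: c'.1 w) ∧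
  (∀ m : Fin k, c'.2 m.castSucc = c.2 m) ∧
  (∀ w : Fin (k+1) → Bool, ∃ x₀ : X,
    (fun z => (f z).1) '' cyl (c'.1 w) ⊆ Metric.closedBall x₀ ((2⁻¹ : ℝ) ^ (k+1)))

/-- realizations -/
def Rz (k : ℕ) (c : Cfg k) (U : Set Nsp) : Set ((Fin k → Bool) → Nsp) :=
  {β | (∀ u, β u ∈ cyl (c.1 u)) ∧ (∀ u v, (f (β u)).1 = (f (β v)).1) ∧ (∀ u, β u ∉ U)}

def Aset (k : ℕ) (c : Cfg k) (U : Set Nsp) : Set Nsp :=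
  (fun β => β (uuF k)) '' Rz f k c U

def INVt (k : ℕ) (c : Cfg k) : Prop :=
  ∀ U : Set Nsp, MeasurableSet U → Small f U → ¬ Small f (Aset f k c U)

variable {f}

lemma measurableSet_Rz (hf : Continuous f) (k : ℕ) (c : Cfg k) {U : Set Nsp}
    (hU : MeasurableSet U) : MeasurableSet (Rz f k c U) := by
  have h1 : MeasurableSet {β : (Fin k → Bool) → Nsp | ∀ u, β u ∈ cyl (c.1 u)} := by
    rw [show {β : (Fin k → Bool) → Nsp | ∀ u, β u ∈ cyl (c.1 u)}
        = ⋂ u, (fun β => β u) ⁻¹' cyl (c.1 u) by ext β; simp]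
    exact MeasurableSet.iInter fun u => (measurableSet_cyl _).preimage (measurable_pi_apply u)
  have h2 : MeasurableSet {β : (Fin k → Bool) → Nsp | ∀ u v, (f (β u)).1 = (f (β v)).1} := by
    rw [show {β : (Fin k → Bool) → Nsp | ∀ u v, (f (β u)).1 = (f (β v)).1}
        = ⋂ u, ⋂ v, {β | (f (β u)).1 = (f (β v)).1} by ext β; simp]
    refine MeasurableSet.iInter fun u => MeasurableSet.iInter fun v => ?_
    have : IsClosed {β : (Fin k → Bool) → Nsp | (f (β u)).1 = (f (β v)).1} := by
      apply isClosed_eq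
      · exact (continuous_fst.comp hf).comp (continuous_apply u)
      · exact (continuous_fst.comp hf).comp (continuous_apply v)
    exact this.measurableSet
  have h3 : MeasurableSet {β : (Fin k → Bool) → Nsp | ∀ u, β u ∉ U} := by
    rw [show {β : (Fin k → Bool) → Nsp | ∀ u, β u ∉ U}
        = ⋂ u, (fun β => β u) ⁻¹' Uᶜ by ext β; simp]
    exact MeasurableSet.iInter fun u => hU.compl.preimage (measurable_pi_apply u)
  have : Rz f k c U = ({β : (Fin k → Bool) → Nsp | ∀ u, β u ∈ cyl (c.1 u)}
      ∩ {β | ∀ u v, (f (β u)).1 = (f (β v)).1}) ∩ {β | ∀ u, β u ∉ U} := by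
    ext β; simp [Rz, and_assoc]
  rw [this]
  exact (h1.inter h2).inter h3

lemma analyticSet_Aset (hf : Continuous f) (k : ℕ) (c : Cfg k) {U : Set Nsp}
    (hU : MeasurableSet U) : AnalyticSet (Aset f k c U) :=
  ((measurableSet_Rz hf k c hU).analyticSet).image_of_continuous (continuous_apply _)

lemma exists_disjoint_rat_balls {a b : X} (hab : a ≠ b) :
    ∃ p q : ℕ × ℚ, a ∈ Metric.ball (TopologicalSpace.denseSeq X p.1) (p.2 : ℝ) ∧
      b ∈ Metric.ball (TopologicalSpace.denseSeq X q.1) (q.2 : ℝ) ∧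
      Disjoint (Yball (X := X) p) (Yball (X := X) q) := by
  have hd : (0 : ℝ) < dist a b := dist_pos.2 hab
  obtain ⟨r, hr1, hr2⟩ := exists_rat_btwn (show dist a b / 5 < dist a b / 4 by linarith)
  have hr0 : (0 : ℝ) < dist a b / 5 := by linarith
  obtain ⟨n, hn⟩ := (TopologicalSpace.denseRange_denseSeq X).exists_dist_lt a hr0
  obtain ⟨m, hm⟩ := (TopologicalSpace.denseRange_denseSeq X).exists_dist_lt b hr0
  refine ⟨(n, r), (m, r), ?_, ?_, ?_⟩
  · simp only [Metric.mem_ball]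
    rw [dist_comm]
    calc dist (TopologicalSpace.denseSeq X n) a = dist a (TopologicalSpace.denseSeq X n) := dist_comm _ _
    _ < dist a b / 5 := hn
    _ < r := hr1
  · simp only [Metric.mem_ball]
    calc dist b (TopologicalSpace.denseSeq X m) < dist a b / 5 := hm
    _ < r := hr1
  · rw [Set.disjoint_left]
    intro p hp hq
    simp only [Yball, Metric.mem_closedBall] at hp hq
    have h1 : dist p a ≤ (r : ℝ) + dist a b / 5 := by
      calc dist p a ≤ dist p (TopologicalSpace.denseSeq X n) + dist (TopologicalSpace.denseSeq X n) a :=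
        dist_triangle _ _ _
      _ ≤ (r : ℝ) + dist a b / 5 := by
        rw [dist_comm (TopologicalSpace.denseSeq X n) a]
        exact add_le_add hp hn.le
    have h2 : dist p b ≤ (r : ℝ) + dist a b / 5 := by
      calc dist p b ≤ dist p (TopologicalSpace.denseSeq X m) + dist (TopologicalSpace.denseSeq X m) b :=
        dist_triangle _ _ _
      _ ≤ (r : ℝ) + dist a b / 5 := by
        rw [dist_comm (TopologicalSpace.denseSeq X m) b]
        exact add_le_add hq hm.le
    have : dist a b ≤ dist a p + dist p b := dist_triangle _ _ _
    rw [dist_comm a p] at this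
    have : dist a b ≤ 2 * ((r : ℝ) + dist a b / 5) := by linarith
    have hr4 : (r : ℝ) < dist a b / 4 := hr2
    linarith

end Scheme

section Step

variable {X : Type} [MetricSpace X] [CompleteSpace X] [SecondCountableTopology X]
  [MeasurableSpace X] [BorelSpace X] [Nonempty X]
variable {f : Nsp → X × X}

lemma step_lemma (hf : Continuous f) (k : ℕ) (c : Cfg k) (hV : Valid f k c) (hI : INVt f k c) :
    ∃ c' : Cfg (k+1), Valid f (k+1) c' ∧ Ext f k c c' ∧ INVt f (k+1) c' := by
  classical
  by_contra hcon
  push_neg at hcon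
  set S := {c' : Cfg (k+1) // Valid f (k+1) c' ∧ Ext f k c c'} with hS
  have hfail : ∀ s : S, ∃ U, MeasurableSet U ∧ Small f U ∧ Small f (Aset f (k+1) s.1 U) := by
    rintro ⟨c', hv, he⟩
    have h1 := hcon c' hv he
    unfold INVt at h1
    push_neg at h1
    exact h1
  choose Uc hUm hUs hUA using hfail
  have hsmallV : Small f ((⋃ s : S, Uc s) ∪ (⋃ s : S, Aset f (k+1) s.1 (Uc s))) :=
    small_union (small_iUnion fun s => hUs s) (small_iUnion fun s => hUA s)
  obtain ⟨UB, hUBm, hUBs, hUBsub⟩ := hsmallV.exists_borel_cover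
  have hns : ¬ Small f (Aset f k c UB) := hI UB hUBm hUBs
  obtain ⟨z, hz, z', hz', he1, he2⟩ :=
    exists_edge_of_not_small hf (analyticSet_Aset hf k c hUBm) hns
  obtain ⟨β, hβ, hβz⟩ := hz
  obtain ⟨β', hβ', hβz'⟩ := hz'
  simp only [] at hβz hβz'
  -- the combined tuple
  set γ : (Fin (k+1) → Bool) → Nsp :=
    fun w => if w (Fin.last k) then β' (initF w) else β (initF w) with hγ
  have hγcyl : ∀ w, γ w ∈ cyl (c.1 (initF w)) := by
    intro w
    by_cases h : w (Fin.last k) <;> simp only [hγ, h, if_true, if_false]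
    · exact hβ'.1 _
    · exact hβ.1 _
  have hγ1 : ∀ w w', (f (γ w)).1 = (f (γ w')).1 := by
    have hcross : (f (β (uuF k))).1 = (f (β' (uuF k))).1 := by
      rw [hβz, hβz']; exact he1
    intro w w'
    by_cases h : w (Fin.last k) <;> by_cases h' : w' (Fin.last k) <;>
      simp only [hγ, h, h', if_true, if_false]
    · exact hβ'.2.1 _ _
    · exact ((hβ'.2.1 (initF w) (uuF k)).trans hcross.symm).trans (hβ.2.1 (uuF k) (initF w'))
    · exact ((hβ.2.1 (initF w) (uuF k)).trans hcross).trans (hβ'.2.1 (uuF k) (initF w'))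
    · exact hβ.2.1 _ _
  have hγU : ∀ w, γ w ∉ UB := by
    intro w
    by_cases h : w (Fin.last k) <;> simp only [hγ, h, if_true, if_false]
    · exact hβ'.2.2 _
    · exact hβ.2.2 _
  -- values at the two new designated children
  have hγf : γ (chainV k false (k+1)) = β (uuF k) := by
    simp only [hγ, chainV_last, if_false, initF_chainV_self, Bool.false_eq_true]
  have hγt : γ (chainV k true (k+1)) = β' (uuF k) := by
    simp only [hγ, chainV_last, if_true, initF_chainV_self]
  -- disjoint rational balls around the two f₂-values
  have hne : (f (β (uuF k))).2 ≠ (f (β' (uuF k))).2 := by rw [hβz, hβz']; exact he2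
  obtain ⟨pf, pt, hpf, hpt, hdisj⟩ := exists_disjoint_rat_balls hne
  -- f₁-ball thresholds
  have hthr1 : ∀ w, ∃ N, (fun z => (f z).1) '' cyl (prefixList (γ w) N)
      ⊆ Metric.closedBall ((f (γ w)).1) ((2⁻¹ : ℝ) ^ (k+1)) := by
    intro w
    have hop : IsOpen ((fun z => (f z).1) ⁻¹' Metric.ball ((f (γ w)).1) ((2⁻¹ : ℝ) ^ (k+1))) :=
      Metric.isOpen_ball.preimage (continuous_fst.comp hf)
    have hmem : γ w ∈ (fun z => (f z).1) ⁻¹' Metric.ball ((f (γ w)).1) ((2⁻¹ : ℝ) ^ (k+1)) := by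
      simp only [mem_preimage, Metric.mem_ball, dist_self]
      positivity
    obtain ⟨N, hN⟩ := cyl_nbhd (γ w) hop hmem
    refine ⟨N, ?_⟩
    rintro x ⟨w', hw', rfl⟩
    exact Metric.ball_subset_closedBall (hN hw')
  choose N1 hN1 using hthr1
  -- f₂-ball thresholds for the two special children
  have hthr2 : ∀ (j : Bool), ∃ N, (fun z => (f z).2) '' cyl (prefixList (γ (chainV k j (k+1))) N)
      ⊆ Yball (X := X) (if j then pt else pf) := by
    intro j
    have hop : IsOpen ((fun z => (f z).2) ⁻¹'
        Metric.ball (TopologicalSpace.denseSeq X (if j then pt else pf).1)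
          (((if j then pt else pf).2 : ℝ))) :=
      Metric.isOpen_ball.preimage (continuous_snd.comp hf)
    have hmem : γ (chainV k j (k+1)) ∈ (fun z => (f z).2) ⁻¹'
        Metric.ball (TopologicalSpace.denseSeq X (if j then pt else pf).1)
          (((if j then pt else pf).2 : ℝ)) := by
      cases j
      · simp only [if_false, mem_preimage, hγf, Bool.false_eq_true]
        exact hpf
      · simp only [if_true, mem_preimage, hγt]
        exact hpt
    obtain ⟨N, hN⟩ := cyl_nbhd _ hop hmem
    refine ⟨N, ?_⟩
    rintro x ⟨w', hw', rfl⟩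
    exact Metric.ball_subset_closedBall (hN hw')
  choose N2 hN2 using hthr2
  -- lengths
  set L : (Fin (k+1) → Bool) → ℕ := fun w =>
    max (max (k+1) ((c.1 (initF w)).length)) (max (N1 w)
      (if w = chainV k false (k+1) then N2 false else if w = chainV k true (k+1) then N2 true else 0))
    with hL
  set c' : Cfg (k+1) :=
    (fun w => prefixList (γ w) (L w),
     fun m j => if hm : (m : ℕ) < k then c.2 ⟨m, hm⟩ j else (if j then pt else pf)) with hc'
  have hLk : ∀ w, k+1 ≤ L w := fun w => le_trans (le_max_left _ _) (le_max_left _ _)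
  have hLc : ∀ w, (c.1 (initF w)).length ≤ L w :=
    fun w => le_trans (le_max_right _ _) (le_max_left _ _)
  have hLN1 : ∀ w, N1 w ≤ L w := fun w => le_trans (le_max_left _ _) (le_max_right _ _)
  have hpre : ∀ w, c.1 (initF w) <+: c'.1 w := by
    intro w
    exact prefix_prefixList (hγcyl w) (hLc w)
  have hball1 : ∀ w, ∃ x₀ : X, (fun z => (f z).1) '' cyl (c'.1 w)
      ⊆ Metric.closedBall x₀ ((2⁻¹ : ℝ) ^ (k+1)) := by
    intro w
    refine ⟨(f (γ w)).1, subset_trans ?_ (hN1 w)⟩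
    exact image_mono (cyl_prefixList_mono (γ w) (hLN1 w))
  have hchne : chainV k true (k+1) ≠ chainV k false (k+1) := by
    intro h
    have := congrFun h (Fin.last k)
    simp [chainV_last] at this
  have hLN2 : ∀ j : Bool, N2 j ≤ L (chainV k j (k+1)) := by
    intro j
    have step1 : (if chainV k j (k+1) = chainV k false (k+1) then N2 false
        else if chainV k j (k+1) = chainV k true (k+1) then N2 true else 0) = N2 j := by
      cases j
      · rw [if_pos rfl]
      · rw [if_neg hchne, if_pos rfl]
    calc N2 j = _ := step1.symm
    _ ≤ max (N1 (chainV k j (k+1))) _ := le_max_right _ _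
    _ ≤ L (chainV k j (k+1)) := le_max_right _ _
  have hball2 : ∀ j : Bool, (fun z => (f z).2) '' cyl (c'.1 (chainV k j (k+1)))
      ⊆ Yball (X := X) (if j then pt else pf) := by
    intro j
    refine subset_trans ?_ (hN2 j)
    exact image_mono (cyl_prefixList_mono _ (hLN2 j))
  have hValid' : Valid f (k+1) c' := by
    refine ⟨?_, ?_, ?_⟩
    · intro u
      simp only [hc', length_prefixList]
      exact hLk u
    · intro m hm j
      rcases Nat.lt_or_ge m k with hmk | hmk
      · have hinit := initF_chainV m j k hmk
        have hpre' : c.1 (chainV m j k) <+: c'.1 (chainV m j (k+1)) := by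
          have := hpre (chainV m j (k+1))
          rwa [hinit] at this
        have hsub : cyl (c'.1 (chainV m j (k+1))) ⊆ cyl (c.1 (chainV m j k)) :=
          cyl_subset_of_prefix hpre'
        have hold := hV.2.1 m hmk j
        have hYeq : c'.2 ⟨m, hm⟩ j = c.2 ⟨m, hmk⟩ j := by
          simp only [hc']
          rw [dif_pos hmk]
        rw [hYeq]
        exact subset_trans (image_mono hsub) hold
      · have hmk' : m = k := by omega
        subst hmk'
        have hYeq : c'.2 ⟨m, hm⟩ j = (if j then pt else pf) := by
          simp only [hc']
          rw [dif_neg (by omega)]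
        rw [hYeq]
        exact hball2 j
    · intro m
      rcases Nat.lt_or_ge (m : ℕ) k with hmk | hmk
      · have h1 : c'.2 m false = c.2 ⟨m, hmk⟩ false := by simp only [hc']; rw [dif_pos hmk]
        have h2 : c'.2 m true = c.2 ⟨m, hmk⟩ true := by simp only [hc']; rw [dif_pos hmk]
        rw [h1, h2]
        exact hV.2.2 ⟨m, hmk⟩
      · have h1 : c'.2 m false = pf := by simp only [hc']; rw [dif_neg (by omega)]; simp
        have h2 : c'.2 m true = pt := by simp only [hc']; rw [dif_neg (by omega)]; simp
        rw [h1, h2]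
        exact hdisj
  have hExt' : Ext f k c c' := by
    refine ⟨hpre, ?_, hball1⟩
    intro m
    funext j
    simp only [hc']
    rw [dif_pos (show ((m.castSucc : Fin (k+1)) : ℕ) < k by simpa using m.isLt)]
    congr 1
  -- the contradiction
  set s₀ : S := ⟨c', hValid', hExt'⟩ with hs₀
  have hγRz : γ ∈ Rz f (k+1) c' (Uc s₀) := by
    refine ⟨?_, hγ1, ?_⟩
    · intro u
      simp only [hc']
      exact mem_cyl_prefixList _ _
    · intro u hu
      apply hγU u
      apply hUBsub
      left
      exact mem_iUnion.2 ⟨s₀, hu⟩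
  have hmem : γ (uuF (k+1)) ∈ Aset f (k+1) c' (Uc s₀) := ⟨γ, hγRz, rfl⟩
  apply hγU (uuF (k+1))
  apply hUBsub
  right
  exact mem_iUnion.2 ⟨s₀, hmem⟩

end Step

section Chain

variable {X : Type} [MetricSpace X] [CompleteSpace X] [SecondCountableTopology X]
  [MeasurableSpace X] [BorelSpace X] [Nonempty X]
variable {f : Nsp → X × X}

def c0 : Cfg 0 := (fun _ => ([] : List ℕ), fun m => m.elim0)

lemma valid0 (f : Nsp → X × X) : Valid f 0 c0 := by
  refine ⟨by simp [c0], ?_, fun m => m.elim0⟩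
  intro m hm
  omega

lemma inv0 (hns : ¬ Small f univ) : INVt f 0 c0 := by
  intro U hU hUs hAs
  apply hns
  have hsub : (univ : Set Nsp) ⊆ U ∪ Aset f 0 c0 U := by
    intro z _
    by_cases hz : z ∈ U
    · exact Or.inl hz
    · refine Or.inr ⟨fun _ => z, ⟨?_, ?_, ?_⟩, rfl⟩
      · intro u i hi
        simp [c0] at hi
      · intro u v
        rfl
      · intro u
        exact hz
  exact (small_union hUs hAs).mono hsub

noncomputable def chainSeq (f : Nsp → X × X) (hf : Continuous f) (hns : ¬ Small f univ) :
    (k : ℕ) → {c : Cfg k // Valid f k c ∧ INVt f k c} := fun k =>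
  Nat.rec (motive := fun k => {c : Cfg k // Valid f k c ∧ INVt f k c})
    ⟨c0, valid0 f, inv0 hns⟩
    (fun k p =>
      ⟨(step_lemma hf k p.1 p.2.1 p.2.2).choose,
       (step_lemma hf k p.1 p.2.1 p.2.2).choose_spec.1,
       (step_lemma hf k p.1 p.2.1 p.2.2).choose_spec.2.2⟩) k

lemma chainSeq_ext (hf : Continuous f) (hns : ¬ Small f univ) (k : ℕ) :
    Ext f k (chainSeq f hf hns k).1 (chainSeq f hf hns (k+1)).1 := by
  have hdef : (chainSeq f hf hns (k+1)).1 =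
      (step_lemma hf k (chainSeq f hf hns k).1 (chainSeq f hf hns k).2.1
        (chainSeq f hf hns k).2.2).choose := rfl
  rw [hdef]
  exact (step_lemma hf k (chainSeq f hf hns k).1 (chainSeq f hf hns k).2.1
    (chainSeq f hf hns k).2.2).choose_spec.2.1

variable (hf : Continuous f) (hns : ¬ Small f univ)

def restr (b : ℕ → Bool) (n : ℕ) : Fin n → Bool := fun i => b i

noncomputable def Zl (b : ℕ → Bool) (n : ℕ) : List ℕ :=
  (chainSeq f hf hns n).1.1 (restr b n)

lemma Zl_len (b : ℕ → Bool) (n : ℕ) : n ≤ (Zl hf hns b n).length :=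
  (chainSeq f hf hns n).2.1.1 _

lemma Zl_prefix (b : ℕ → Bool) (n : ℕ) : Zl hf hns b n <+: Zl hf hns b (n+1) := by
  have h := (chainSeq_ext hf hns n).1 (restr b (n+1))
  have hin : initF (restr b (n+1)) = restr b n := by
    funext i
    simp [initF, restr]
  rwa [hin] at h

lemma Zl_prefix_le (b : ℕ → Bool) {m n : ℕ} (h : m ≤ n) :
    Zl hf hns b m <+: Zl hf hns b n := by
  induction n with
  | zero => rw [Nat.le_zero.1 h]
  | succ n ih =>
    rcases Nat.lt_or_ge m (n+1) with h' | h'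
    · exact (ih (by omega)).trans (Zl_prefix hf hns b n)
    · have : m = n + 1 := by omega
      rw [this]

noncomputable def limF (b : ℕ → Bool) : Nsp := fun i =>
  (Zl hf hns b (i+1))[i]'(lt_of_lt_of_le (Nat.lt_succ_self i) (Zl_len hf hns b (i+1)))

lemma limF_mem_cyl (b : ℕ → Bool) (n : ℕ) : limF hf hns b ∈ cyl (Zl hf hns b n) := by
  intro i hi
  simp only [limF]
  rcases le_total (i+1) n with h | h
  · exact (Zl_prefix_le hf hns b h).getElem _
  · exact ((Zl_prefix_le hf hns b h).getElem hi).symm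

lemma exists_realization (n : ℕ) :
    ∃ β, β ∈ Rz f n (chainSeq f hf hns n).1 (∅ : Set Nsp) := by
  have h := (chainSeq f hf hns n).2.2 ∅ MeasurableSet.empty small_empty
  obtain ⟨z, β, hβ, -⟩ := nonempty_of_not_small h
  exact ⟨β, hβ⟩

lemma limF_const (b b' : ℕ → Bool) : (f (limF hf hns b)).1 = (f (limF hf hns b')).1 := by
  have key : ∀ n : ℕ, dist (f (limF hf hns b)).1 (f (limF hf hns b')).1 ≤ 4 * (2⁻¹ : ℝ) ^ (n+1) := by
    intro n
    obtain ⟨β, hβ⟩ := exists_realization hf hns (n+1)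
    have hball := (chainSeq_ext hf hns n).2.2
    have est : ∀ (bb : ℕ → Bool), dist (f (limF hf hns bb)).1 (f (β (restr bb (n+1)))).1
        ≤ 2 * (2⁻¹ : ℝ) ^ (n+1) := by
      intro bb
      obtain ⟨x₀, hx₀⟩ := hball (restr bb (n+1))
      have h1 : (f (limF hf hns bb)).1 ∈ Metric.closedBall x₀ ((2⁻¹ : ℝ) ^ (n+1)) :=
        hx₀ ⟨limF hf hns bb, limF_mem_cyl hf hns bb (n+1), rfl⟩
      have h2 : (f (β (restr bb (n+1)))).1 ∈ Metric.closedBall x₀ ((2⁻¹ : ℝ) ^ (n+1)) :=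
        hx₀ ⟨β (restr bb (n+1)), hβ.1 _, rfl⟩
      calc dist (f (limF hf hns bb)).1 (f (β (restr bb (n+1)))).1
          ≤ dist (f (limF hf hns bb)).1 x₀ + dist x₀ (f (β (restr bb (n+1)))).1 := dist_triangle _ _ _
        _ ≤ (2⁻¹ : ℝ) ^ (n+1) + (2⁻¹ : ℝ) ^ (n+1) := by
            refine add_le_add (Metric.mem_closedBall.1 h1) ?_
            rw [dist_comm]
            exact Metric.mem_closedBall.1 h2
        _ = 2 * (2⁻¹ : ℝ) ^ (n+1) := by ring
    have hmid : (f (β (restr b (n+1)))).1 = (f (β (restr b' (n+1)))).1 := hβ.2.1 _ _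
    calc dist (f (limF hf hns b)).1 (f (limF hf hns b')).1
        ≤ dist (f (limF hf hns b)).1 (f (β (restr b (n+1)))).1
          + dist (f (β (restr b (n+1)))).1 (f (limF hf hns b')).1 := dist_triangle _ _ _
      _ ≤ 2 * (2⁻¹ : ℝ) ^ (n+1) + 2 * (2⁻¹ : ℝ) ^ (n+1) := by
          refine add_le_add (est b) ?_
          rw [hmid, dist_comm]
          exact est b'
      _ = 4 * (2⁻¹ : ℝ) ^ (n+1) := by ring
  have hlim : Filter.Tendsto (fun n : ℕ => 4 * (2⁻¹ : ℝ) ^ (n+1)) Filter.atTop (nhds 0) := by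
    have h0 : Filter.Tendsto (fun n : ℕ => (2⁻¹ : ℝ) ^ n) Filter.atTop (nhds 0) :=
      tendsto_pow_atTop_nhds_zero_of_lt_one (by norm_num) (by norm_num)
    have := (h0.comp (Filter.tendsto_add_atTop_nat 1)).const_mul (4 : ℝ)
    simpa using this
  have hd : dist (f (limF hf hns b)).1 (f (limF hf hns b')).1 ≤ 0 :=
    ge_of_tendsto hlim (Filter.Eventually.of_forall key)
  exact dist_le_zero.1 hd

noncomputable def branchB (m : ℕ) (j : Bool) : ℕ → Bool := fun i =>
  if i < m then (enumL m).getD i false else if i = m then j else false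

lemma restr_branchB (m : ℕ) (j : Bool) (n : ℕ) : restr (branchB m j) n = chainV m j n := by
  funext i
  simp [restr, branchB, chainV]

lemma branch_sep (m : ℕ) :
    (f (limF hf hns (branchB m false))).2 ≠ (f (limF hf hns (branchB m true))).2 := by
  have hV := (chainSeq f hf hns (m+1)).2.1
  have hmem : ∀ j : Bool, (f (limF hf hns (branchB m j))).2
      ∈ Yball (X := X) ((chainSeq f hf hns (m+1)).1.2 ⟨m, Nat.lt_succ_self m⟩ j) := by
    intro j
    have h1 := hV.2.1 m (Nat.lt_succ_self m) j
    apply h1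
    refine ⟨limF hf hns (branchB m j), ?_, rfl⟩
    have := limF_mem_cyl hf hns (branchB m j) (m+1)
    unfold Zl at this
    rwa [restr_branchB] at this
  have hdisj := hV.2.2 ⟨m, Nat.lt_succ_self m⟩
  intro h
  apply Set.disjoint_left.1 hdisj (hmem false)
  rw [h]
  exact hmem true

lemma continuous_limF : Continuous (limF hf hns) := by
  apply continuous_pi
  intro i
  apply IsLocallyConstant.continuous
  intro s
  rw [isOpen_iff_mem_nhds]
  intro b hb
  have hopen : IsOpen {b' : ℕ → Bool | restr b' (i+1) = restr b (i+1)} := by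
    have : {b' : ℕ → Bool | restr b' (i+1) = restr b (i+1)}
        = ⋂ jj : Fin (i+1), {b' : ℕ → Bool | b' jj = b jj} := by
      ext b'
      constructor
      · intro h
        simp only [mem_iInter, mem_setOf_eq]
        intro jj
        exact congrFun h jj
      · intro h
        funext jj
        simp only [mem_iInter, mem_setOf_eq] at h
        exact h jj
    rw [this]
    refine isOpen_iInter_of_finite fun jj => ?_
    have h2 : {b' : ℕ → Bool | b' (jj : ℕ) = b (jj : ℕ)}
        = (fun b' : ℕ → Bool => b' (jj : ℕ)) ⁻¹' {b (jj : ℕ)} := by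
      ext b'; simp
    rw [h2]
    exact (isOpen_discrete _).preimage (continuous_apply ((jj : ℕ)))
  have heq : ∀ b' : ℕ → Bool, restr b' (i+1) = restr b (i+1) →
      limF hf hns b' i = limF hf hns b i := by
    intro b' h
    unfold limF Zl
    congr 1
    rw [h]
  refine Filter.mem_of_superset (hopen.mem_nhds (by simp)) ?_
  intro b' hb'
  have hbeq : limF hf hns b' i = limF hf hns b i := heq b' hb'
  simp only [mem_preimage] at hb ⊢
  rw [hbeq]
  exact hb

theorem small_univ_of_sections (hfc : Continuous f)
    (hsec : ∀ x : X, {y : X | (x, y) ∈ range f}.Countable) : Small f univ := by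
  by_contra hns
  set cstar := (f (limF hfc hns (fun _ => false))).1 with hcs
  have hconst : ∀ b, (f (limF hfc hns b)).1 = cstar := fun b => limF_const hfc hns b _
  have hmem : ∀ b, (f (limF hfc hns b)).2 ∈ {y : X | (cstar, y) ∈ range f} := by
    intro b
    have h1 : f (limF hfc hns b) ∈ range f := mem_range_self _
    have h2 : ((f (limF hfc hns b)).1, (f (limF hfc hns b)).2) = f (limF hfc hns b) := rfl
    show (cstar, (f (limF hfc hns b)).2) ∈ range f
    rw [← hconst b, h2]
    exact h1
  haveI := (hsec cstar).to_subtype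
  set T : ↥{y : X | (cstar, y) ∈ range f} → Set (ℕ → Bool) :=
    fun y => {b | (f (limF hfc hns b)).2 = y.1} with hT
  have hTclosed : ∀ y, IsClosed (T y) := fun y =>
    isClosed_eq ((continuous_snd.comp hfc).comp (continuous_limF hfc hns)) continuous_const
  have hTcover : ⋃ y, T y = univ := by
    ext b
    simp only [mem_iUnion, mem_univ, iff_true]
    exact ⟨⟨_, hmem b⟩, rfl⟩
  obtain ⟨y₀, hy₀⟩ := nonempty_interior_of_iUnion_of_closed hTclosed hTcover
  obtain ⟨b₀, hb₀⟩ := hy₀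
  obtain ⟨N, hN⟩ := pi_nbhd b₀ isOpen_interior hb₀
  obtain ⟨k, hk, hek⟩ := enumL_surj (List.ofFn (fun i : Fin N => b₀ i)) N
  have hagree : ∀ (j : Bool) (i : ℕ), i < N → branchB k j i = b₀ i := by
    intro j i hi
    have hik : i < k := lt_of_lt_of_le hi hk
    have hlen : i < (enumL k).length := by
      rw [hek]
      simpa using hi
    simp only [branchB, if_pos hik]
    rw [List.getD_eq_getElem _ _ hlen]
    have : (enumL k)[i] = (List.ofFn (fun i : Fin N => b₀ i))[i]'(by rw [← hek]; exact hlen) := by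
      congr 1
    rw [this, List.getElem_ofFn]
  have hbin : ∀ j : Bool, branchB k j ∈ T y₀ := by
    intro j
    exact interior_subset (hN _ (fun i hi => hagree j i hi))
  have h0 : (f (limF hfc hns (branchB k false))).2 = y₀.1 := hbin false
  have h1 : (f (limF hfc hns (branchB k true))).2 = y₀.1 := hbin true
  exact branch_sep hfc hns k (h0.trans h1.symm)

end Chain

section LN

variable {X : Type} [MetricSpace X] [CompleteSpace X] [SecondCountableTopology X]
  [MeasurableSpace X] [BorelSpace X] [Nonempty X]

/-- Lusin–Novikov covering theorem (metric form): a Borel set with countable vertical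
sections is covered by countably many Borel partial graphs contained in it. -/
theorem lusin_novikov_core (Es : Set (X × X)) (hEs : MeasurableSet Es)
    (hsec : ∀ x : X, {y : X | (x, y) ∈ Es}.Countable) :
    ∃ G : ℕ → Set (X × X), (∀ n, MeasurableSet (G n)) ∧ (∀ n, Gr (G n)) ∧
      (∀ n, G n ⊆ Es) ∧ Es ⊆ ⋃ n, G n := by
  rcases Es.eq_empty_or_nonempty with hemp | hne
  · refine ⟨fun _ => ∅, fun n => MeasurableSet.empty, fun n => by rintro p hp; simp at hp,
      fun n => empty_subset _, by rw [hemp]; exact empty_subset _⟩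
  · have hana := hEs.analyticSet
    rw [AnalyticSet] at hana
    rcases hana with h | ⟨f, hfc, hfr⟩
    · exact absurd h (Set.nonempty_iff_ne_empty.1 hne)
    · have hsec' : ∀ x : X, {y : X | (x, y) ∈ range f}.Countable := by
        intro x
        rw [hfr]
        exact hsec x
      have hsm : Small f univ := small_univ_of_sections hfc hsec'
      obtain ⟨C, hC1, hC2, hC3⟩ := hsm
      have hCne : C.Nonempty := by
        rcases C.eq_empty_or_nonempty with h | h
        · exfalso
          have : (univ : Set Nsp) ⊆ ∅ := by rwa [h, Set.sUnion_empty] at hC3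
          exact absurd (this (mem_univ (fun _ => 0))) (by simp)
        · exact h
      obtain ⟨e, he⟩ := Set.Countable.exists_eq_range hC1 hCne
      have hgraphs : ∀ n : ℕ, ∃ G : Set (X × X), MeasurableSet G ∧ f '' (e n) ⊆ G ∧ Gr G := by
        intro n
        have hen : e n ∈ C := by rw [he]; exact mem_range_self n
        have hana : AnalyticSet (f '' (e n)) :=
          ((hC2 _ hen).1.analyticSet).image_of_continuous hfc
        have hGr : Gr (f '' (e n)) := by
          rintro p ⟨z, hz, rfl⟩ q ⟨z', hz', rfl⟩ h1
          exact (hC2 _ hen).2 z hz z' hz' h1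
        exact graph_ext hana hGr
      choose G hG1 hG2 hG3 using hgraphs
      refine ⟨fun n => G n ∩ Es, fun n => (hG1 n).inter hEs, ?_, fun n => inter_subset_right, ?_⟩
      · intro n p hp q hq h1
        exact hG3 n p hp.1 q hq.1 h1
      · intro p hp
        rw [← hfr] at hp
        obtain ⟨z, rfl⟩ := hp
        have hz : z ∈ ⋃₀ C := hC3 (mem_univ z)
        obtain ⟨B, hB, hzB⟩ := hz
        rw [he] at hB
        obtain ⟨n, rfl⟩ := hB
        refine mem_iUnion.2 ⟨n, hG2 n ⟨z, hzB, rfl⟩, ?_⟩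
        rw [← hfr]
        exact mem_range_self z

end LN

section Assembly

variable {X : Type} [MetricSpace X] [CompleteSpace X] [SecondCountableTopology X]
  [MeasurableSpace X] [BorelSpace X] [Nonempty X]

/-- a countable measurable separating family -/
lemma exists_sep_family : ∃ S : ℕ × ℚ → Set X, (∀ p, MeasurableSet (S p)) ∧
    ∀ x y : X, x ≠ y → ∃ p, x ∈ S p ∧ y ∉ S p := by
  refine ⟨fun p => Metric.ball (TopologicalSpace.denseSeq X p.1) (p.2 : ℝ),
    fun p => Metric.isOpen_ball.measurableSet, ?_⟩
  intro x y hxy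
  have hd : (0 : ℝ) < dist x y := dist_pos.2 hxy
  obtain ⟨q, hq1, hq2⟩ := exists_rat_btwn (show dist x y / 3 < dist x y / 2 by linarith)
  obtain ⟨n, hn⟩ := (TopologicalSpace.denseRange_denseSeq X).exists_dist_lt x (by linarith : (0:ℝ) < dist x y / 3)
  refine ⟨(n, q), ?_, ?_⟩
  · simp only [Metric.mem_ball]
    calc dist x (TopologicalSpace.denseSeq X n) < dist x y / 3 := hn
    _ < q := hq1
  · simp only [Metric.mem_ball, not_lt]
    have h1 : dist x y ≤ dist x (TopologicalSpace.denseSeq X n) + dist (TopologicalSpace.denseSeq X n) y := dist_triangle _ _ _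
    have h2 : dist x y - dist x y / 3 ≤ dist (TopologicalSpace.denseSeq X n) y := by linarith
    have h4 : dist (TopologicalSpace.denseSeq X n) y = dist y (TopologicalSpace.denseSeq X n) :=
      dist_comm _ _
    linarith
  
/-- measurable involutions generating a Borel set with countable sections,
which is symmetric -/
lemma exists_involutions (Es : Set (X × X)) (hEs : MeasurableSet Es)
    (hsec : ∀ x : X, {y : X | (x, y) ∈ Es}.Countable) :
    ∃ T : ℕ × ℕ × ℕ × ℚ → X → X, (∀ i, Function.Involutive (T i)) ∧
      (∀ i, Measurable (T i)) ∧
      (∀ i x, T i x = x ∨ (x, T i x) ∈ Es ∨ (T i x, x) ∈ Es) ∧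
      (∀ p ∈ Es, ∀ q ∈ Es, p.1 ≠ p.2 → q = (p.2, p.1) → ∃ i, T i p.1 = p.2) := by
  classical
  obtain ⟨G, hG1, hG2, hG3, hG4⟩ := lusin_novikov_core Es hEs hsec
  obtain ⟨S, hS1, hS2⟩ := exists_sep_family (X := X)
  -- the bijective pieces
  set W : ℕ × ℕ × ℕ × ℚ → Set (X × X) := fun i =>
    {q | q ∈ G i.1 ∧ (q.2, q.1) ∈ G i.2.1 ∧ q.1 ≠ q.2 ∧ q.1 ∈ S i.2.2 ∧ q.2 ∉ S i.2.2}
    with hW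
  have hWm : ∀ i, MeasurableSet (W i) := by
    intro i
    have hrw : W i = ((((G i.1) ∩ {q : X × X | (q.2, q.1) ∈ G i.2.1}) ∩ {q : X × X | q.1 = q.2}ᶜ)
        ∩ {q : X × X | q.1 ∈ S i.2.2}) ∩ {q : X × X | q.2 ∈ S i.2.2}ᶜ := by
      ext p
      simp only [hW, mem_inter_iff, mem_setOf_eq, mem_compl_iff]
      tauto
    rw [hrw]
    refine ((((hG1 i.1).inter ?_).inter ?_).inter ?_).inter ?_
    · exact (hG1 i.2.1).preimage (measurable_snd.prodMk measurable_fst)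
    · exact (isClosed_eq continuous_fst continuous_snd).measurableSet.compl
    · exact (hS1 i.2.2).preimage measurable_fst
    · exact ((hS1 i.2.2).preimage measurable_snd).compl
  have hWuniq1 : ∀ i {x y y'}, (x, y) ∈ W i → (x, y') ∈ W i → y = y' := by
    intro i x y y' h1 h2
    exact hG2 i.1 _ h1.1 _ h2.1 rfl
  have hWuniq2 : ∀ i {x x' y}, (x, y) ∈ W i → (x', y) ∈ W i → x = x' := by
    intro i x x' y h1 h2
    exact hG2 i.2.1 _ h1.2.1 _ h2.2.1 rfl
  have hWinj1 : ∀ i, InjOn Prod.fst (W i) := by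
    intro i p hp q hq h
    have : p.2 = q.2 := hG2 i.1 _ hp.1 _ hq.1 h
    exact Prod.ext h this
  have hWinj2 : ∀ i, InjOn Prod.snd (W i) := by
    intro i p hp q hq h
    have h2 : (p.2, p.1) ∈ G i.2.1 := hp.2.1
    have h3 : (q.2, q.1) ∈ G i.2.1 := hq.2.1
    have : p.1 = q.1 := hG2 i.2.1 _ h2 _ h3 h
    exact Prod.ext this h
  -- the involution
  set T : ℕ × ℕ × ℕ × ℚ → X → X := fun i x =>
    if h : ∃ y, (x, y) ∈ W i then h.choose
    else if h' : ∃ y, (y, x) ∈ W i then h'.choose else x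
    with hT
  have hTd : ∀ i x (h : ∃ y, (x, y) ∈ W i), T i x = h.choose := by
    intro i x h
    simp only [hT, dif_pos h]
  have hTr : ∀ i x (h : ¬ ∃ y, (x, y) ∈ W i) (h' : ∃ y, (y, x) ∈ W i), T i x = h'.choose := by
    intro i x h h'
    simp only [hT, dif_neg h, dif_pos h']
  have hTid : ∀ i x, ¬ (∃ y, (x, y) ∈ W i) → ¬ (∃ y, (y, x) ∈ W i) → T i x = x := by
    intro i x h h'
    simp only [hT, dif_neg h, dif_neg h']
  -- no point is in both the domain and the range
  have hDR : ∀ i x, (∃ y, (x, y) ∈ W i) → ¬ (∃ y, (y, x) ∈ W i) := by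
    rintro i x ⟨y, hy⟩ ⟨z, hz⟩
    exact hz.2.2.2.2 hy.2.2.2.1
  have hTW : ∀ i x (h : ∃ y, (x, y) ∈ W i), (x, T i x) ∈ W i := by
    intro i x h
    rw [hTd i x h]
    exact h.choose_spec
  have hTW' : ∀ i x (h : ¬ ∃ y, (x, y) ∈ W i) (h' : ∃ y, (y, x) ∈ W i), (T i x, x) ∈ W i := by
    intro i x h h'
    rw [hTr i x h h']
    exact h'.choose_spec
  have hTinv : ∀ i, Function.Involutive (T i) := by
    intro i x
    by_cases h : ∃ y, (x, y) ∈ W i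
    · have h1 : (x, T i x) ∈ W i := hTW i x h
      have h2 : ¬ ∃ y, (T i x, y) ∈ W i := by
        rintro ⟨y, hy⟩
        exact h1.2.2.2.2 hy.2.2.2.1
      have h3 : ∃ y, (y, T i x) ∈ W i := ⟨x, h1⟩
      rw [hTr i (T i x) h2 h3]
      exact hWuniq2 i h3.choose_spec h1
    · by_cases h' : ∃ y, (y, x) ∈ W i
      · have h1 : (T i x, x) ∈ W i := hTW' i x h h'
        have h2 : ∃ y, (T i x, y) ∈ W i := ⟨x, h1⟩
        rw [hTd i (T i x) h2]
        exact hWuniq1 i h2.choose_spec h1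
      · rw [hTid i x h h', hTid i x h h']
  have hTgraph : ∀ i x, T i x = x ∨ (x, T i x) ∈ Es ∨ (T i x, x) ∈ Es := by
    intro i x
    by_cases h : ∃ y, (x, y) ∈ W i
    · exact Or.inr (Or.inl (hG3 i.1 (hTW i x h).1))
    · by_cases h' : ∃ y, (y, x) ∈ W i
      · exact Or.inr (Or.inr (hG3 i.1 (hTW' i x h h').1))
      · exact Or.inl (hTid i x h h')
  have hTmeas : ∀ i, Measurable (T i) := by
    intro i
    set D : Set X := Prod.fst '' W i with hD
    set R : Set X := Prod.snd '' W i with hR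
    have hDm : MeasurableSet D :=
      MeasurableSet.image_of_measurable_injOn (hWm i) measurable_fst (hWinj1 i)
    have hRm : MeasurableSet R :=
      MeasurableSet.image_of_measurable_injOn (hWm i) measurable_snd (hWinj2 i)
    have hxD : ∀ x : X, x ∈ D ↔ ∃ y, (x, y) ∈ W i := by
      intro x
      constructor
      · rintro ⟨p, hp, rfl⟩
        exact ⟨p.2, by rwa [Prod.mk.eta]⟩
      · rintro ⟨y, hy⟩
        exact ⟨(x, y), hy, rfl⟩
    have hxR : ∀ x : X, x ∈ R ↔ ∃ y, (y, x) ∈ W i := by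
      intro x
      constructor
      · rintro ⟨p, hp, rfl⟩
        exact ⟨p.1, by rwa [Prod.mk.eta]⟩
      · rintro ⟨y, hy⟩
        exact ⟨(y, x), hy, rfl⟩
    intro B hB
    have key : T i ⁻¹' B = ((Prod.fst '' (W i ∩ (univ ×ˢ B))) ∪ (Prod.snd '' (W i ∩ (B ×ˢ univ))))
        ∪ (B \ (D ∪ R)) := by
      ext x
      simp only [mem_preimage, mem_union, mem_diff]
      constructor
      · intro hx
        by_cases h : ∃ y, (x, y) ∈ W i
        · refine Or.inl (Or.inl ⟨(x, T i x), ⟨hTW i x h, ⟨mem_univ _, hx⟩⟩, rfl⟩)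
        · by_cases h' : ∃ y, (y, x) ∈ W i
          · refine Or.inl (Or.inr ⟨(T i x, x), ⟨hTW' i x h h', ⟨hx, mem_univ _⟩⟩, rfl⟩)
          · refine Or.inr ⟨by rwa [hTid i x h h'] at hx, ?_⟩
            rintro (hxd | hxr)
            · exact h ((hxD x).1 hxd)
            · exact h' ((hxR x).1 hxr)
      · rintro ((⟨p, ⟨hpW, -, hpB⟩, rfl⟩ | ⟨p, ⟨hpW, hpB, -⟩, rfl⟩) | ⟨hxB, hxDR⟩)
        · have hp : (p.1, p.2) ∈ W i := by rwa [Prod.mk.eta]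
          have h : ∃ y, (p.1, y) ∈ W i := ⟨p.2, hp⟩
          have : T i p.1 = p.2 := by
            rw [hTd i p.1 h]
            exact hWuniq1 i h.choose_spec hp
          rwa [this]
        · have hp : (p.1, p.2) ∈ W i := by rwa [Prod.mk.eta]
          have h : ¬ ∃ y, (p.2, y) ∈ W i := by
            rintro ⟨y, hy⟩
            exact hp.2.2.2.2 hy.2.2.2.1
          have h' : ∃ y, (y, p.2) ∈ W i := ⟨p.1, hp⟩
          have : T i p.2 = p.1 := by
            rw [hTr i p.2 h h']
            exact hWuniq2 i h'.choose_spec hp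
          rwa [this]
        · have h : ¬ ∃ y, (x, y) ∈ W i := fun hh => hxDR (Or.inl ((hxD x).2 hh))
          have h' : ¬ ∃ y, (y, x) ∈ W i := fun hh => hxDR (Or.inr ((hxR x).2 hh))
          rwa [hTid i x h h']
    rw [key]
    refine MeasurableSet.union (MeasurableSet.union ?_ ?_) (hB.diff (hDm.union hRm))
    · exact MeasurableSet.image_of_measurable_injOn ((hWm i).inter (MeasurableSet.univ.prod hB))
        measurable_fst ((hWinj1 i).mono inter_subset_left)
    · exact MeasurableSet.image_of_measurable_injOn ((hWm i).inter (hB.prod MeasurableSet.univ))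
        measurable_snd ((hWinj2 i).mono inter_subset_left)
  refine ⟨T, hTinv, hTmeas, hTgraph, ?_⟩
  intro p hp q hq hne hq'
  obtain ⟨k, hk⟩ := mem_iUnion.1 (hG4 hp)
  obtain ⟨l, hl⟩ := mem_iUnion.1 (hG4 hq)
  obtain ⟨pr, hpr1, hpr2⟩ := hS2 p.1 p.2 hne
  have hWmem : (p.1, p.2) ∈ W (k, l, pr) := by
    refine ⟨by rwa [Prod.mk.eta], ?_, hne, hpr1, hpr2⟩
    show (p.2, p.1) ∈ G l
    rwa [← hq']
  refine ⟨(k, l, pr), ?_⟩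
  have h : ∃ y, (p.1, y) ∈ W (k, l, pr) := ⟨p.2, hWmem⟩
  rw [hTd _ p.1 h]
  exact hWuniq1 _ h.choose_spec hWmem

end Assembly

instance freeGroupCountable (α : Type) [Countable α] : Countable (FreeGroup α) := by
  classical
  exact Function.Injective.countable (f := FreeGroup.toWord) FreeGroup.toWord_injective

end FMproof

open FMproof in
/-- Feldman–Moore theorem: every countable Borel equivalence relation on a Polish space is
the orbit equivalence relation of a Borel action of a countable group. -/
theorem feldman_moore
    (X : Type) [TopologicalSpace X] [PolishSpace X] [MeasurableSpace X] [BorelSpace X]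
    (E : X → X → Prop) (hE : Equivalence E)
    (hBorel : MeasurableSet {p : X × X | E p.1 p.2})
    (hctble : ∀ x : X, {y : X | E x y}.Countable) :
    ∃ (Γ : Type) (_ : Group Γ) (_ : Countable Γ) (act : Γ → X → X),
      (∀ x : X, act 1 x = x) ∧
      (∀ (γ δ : Γ) (x : X), act γ (act δ x) = act (γ * δ) x) ∧
      (∀ γ : Γ, Measurable (act γ)) ∧
      (∀ x y : X, E x y ↔ ∃ γ : Γ, act γ x = y) := by
  classical
  rcases isEmpty_or_nonempty X with hX | hX
  · exact ⟨Multiplicative ℤ, inferInstance, inferInstance, fun _ x => x,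
      fun x => rfl, fun γ δ x => rfl, fun γ => measurable_id,
      fun x y => (IsEmpty.false x).elim⟩
  · letI := TopologicalSpace.upgradeIsCompletelyMetrizable X
    obtain ⟨T, hTinv, hTmeas, hTgraph, hTcover⟩ :=
      FMproof.exists_involutions {p : X × X | E p.1 p.2} hBorel (fun x => hctble x)
    set gen : ℕ × ℕ × ℕ × ℚ → Equiv.Perm X := fun i => (hTinv i).toPerm with hgen
    set φ : FreeGroup (ℕ × ℕ × ℕ × ℚ) →* Equiv.Perm X := FreeGroup.lift gen with hφ
    have hcoe : ∀ i, ⇑(gen i) = T i := fun i => Function.Involutive.coe_toPerm (hTinv i)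
    have hcoeinv : ∀ i, ⇑(gen i)⁻¹ = T i := by
      intro i
      have h1 : (gen i)⁻¹ = (gen i).symm := rfl
      rw [h1, Function.Involutive.toPerm_symm (hTinv i)]
      exact hcoe i
    have hgraphE : ∀ i x, E x (T i x) := by
      intro i x
      rcases hTgraph i x with h | h | h
      · rw [h]; exact hE.refl x
      · exact h
      · exact hE.symm h
    -- measurability by induction on words
    have hmeas : ∀ γ : FreeGroup (ℕ × ℕ × ℕ × ℚ), Measurable ⇑(φ γ) ∧ Measurable ⇑(φ γ)⁻¹ := by
      intro γ
      refine FreeGroup.induction_on γ ⟨?_, ?_⟩ (fun i => ⟨?_, ?_⟩) (fun i h => ⟨?_, ?_⟩)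
        (fun a b ha hb => ⟨?_, ?_⟩)
      · rw [map_one]; exact measurable_id
      · rw [map_one, inv_one]; exact measurable_id
      · show Measurable ⇑(φ (FreeGroup.of i))
        rw [hφ, FreeGroup.lift_apply_of, hcoe]
        exact hTmeas i
      · show Measurable ⇑(φ (FreeGroup.of i))⁻¹
        rw [hφ, FreeGroup.lift_apply_of, hcoeinv]
        exact hTmeas i
      · rw [map_inv]; exact h.2
      · rw [map_inv, inv_inv]; exact h.1
      · rw [map_mul]
        have : ⇑(φ a * φ b) = ⇑(φ a) ∘ ⇑(φ b) := rfl
        rw [this]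
        exact ha.1.comp hb.1
      · rw [map_mul, mul_inv_rev]
        have : ⇑((φ b)⁻¹ * (φ a)⁻¹) = ⇑(φ b)⁻¹ ∘ ⇑(φ a)⁻¹ := rfl
        rw [this]
        exact hb.2.comp ha.2
    -- orbits stay in classes
    have horb : ∀ γ : FreeGroup (ℕ × ℕ × ℕ × ℚ), (∀ x, E x (φ γ x)) ∧ (∀ x, E x ((φ γ)⁻¹ x)) := by
      intro γ
      refine FreeGroup.induction_on γ ⟨?_, ?_⟩ (fun i => ⟨?_, ?_⟩) (fun i h => ⟨?_, ?_⟩)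
        (fun a b ha hb => ⟨?_, ?_⟩)
      · intro x; rw [map_one]; exact hE.refl x
      · intro x; rw [map_one, inv_one]; exact hE.refl x
      · intro x
        show E x (φ (FreeGroup.of i) x)
        rw [hφ, FreeGroup.lift_apply_of]
        have : (gen i) x = T i x := congrFun (hcoe i) x
        rw [this]
        exact hgraphE i x
      · intro x
        show E x ((φ (FreeGroup.of i))⁻¹ x)
        rw [hφ, FreeGroup.lift_apply_of]
        have : ((gen i)⁻¹) x = T i x := congrFun (hcoeinv i) x
        rw [this]
        exact hgraphE i x
      · intro x; rw [map_inv]; exact h.2 x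
      · intro x; rw [map_inv, inv_inv]; exact h.1 x
      · intro x
        rw [map_mul]
        have h1 : (φ a * φ b) x = φ a (φ b x) := Equiv.Perm.mul_apply _ _ _
        rw [h1]
        exact hE.trans (hb.1 x) (ha.1 (φ b x))
      · intro x
        rw [map_mul, mul_inv_rev]
        have h1 : ((φ b)⁻¹ * (φ a)⁻¹) x = (φ b)⁻¹ ((φ a)⁻¹ x) := Equiv.Perm.mul_apply _ _ _
        rw [h1]
        exact hE.trans (ha.2 x) (hb.2 ((φ a)⁻¹ x))
    refine ⟨FreeGroup (ℕ × ℕ × ℕ × ℚ), inferInstance, inferInstance, fun γ x => φ γ x,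
      ?_, ?_, ?_, ?_⟩
    · intro x
      show φ 1 x = x
      rw [map_one]
      rfl
    · intro γ δ x
      show φ γ (φ δ x) = φ (γ * δ) x
      rw [map_mul]
      exact (Equiv.Perm.mul_apply _ _ _).symm
    · intro γ
      exact (hmeas γ).1
    · intro x y
      constructor
      · intro hxy
        by_cases heq : x = y
        · refine ⟨1, ?_⟩
          show φ 1 x = y
          rw [map_one, heq]
          rfl
        · obtain ⟨i, hi⟩ := hTcover (x, y) hxy (y, x) (hE.symm hxy) heq rfl
          refine ⟨FreeGroup.of i, ?_⟩
          show φ (FreeGroup.of i) x = y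
          rw [hφ, FreeGroup.lift_apply_of]
          rw [show (gen i) x = T i x from congrFun (hcoe i) x]
          exact hi
      · rintro ⟨γ, rfl⟩
        exact (horb γ).1 x
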